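/- Let ψ, ψ⊥, φ be orthonormal vectors in a complex Hilbert space, let a, b be nonzero complex numbers, and let α, β be nonzero complex numbers. For phases θ₁, θ₂, θ₃, define Ψ₁ = αψ + βe^{iθ₁}φ, Ψ₂ = αψ⊥ + βe^{iθ₂}φ, and Ψ₃ = α(aψ + bψ⊥) + βe^{iθ₃}φ. Then Ψ₁, Ψ₂, Ψ₃ are linearly dependent if and only if e^{iθ₃} = a·e^{iθ₁} + b·e^{iθ₂}. -/
import Mathlib


open scoped ComplexInnerProductSpace

/-- with orthonormal `ψ, ψ⊥, φ` and nonzero `a, b, α, β`, the three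
superposed outputs `Ψ₁, Ψ₂, Ψ₃` are linearly dependent iff
`e^{iθ₃} = a e^{iθ₁} + b e^{iθ₂}`. -/
theorem stmt7 {H : Type*} [NormedAddCommGroup H] [InnerProductSpace ℂ H]
    (ψ ψp φ : H) (hψ : ‖ψ‖ = 1) (hψp : ‖ψp‖ = 1) (hφ : ‖φ‖ = 1)
    (h₁ : ⟪ψ, ψp⟫ = 0) (h₂ : ⟪ψ, φ⟫ = 0) (h₃ : ⟪ψp, φ⟫ = 0)
    (a b α β : ℂ) (ha : a ≠ 0) (hb : b ≠ 0) (hα : α ≠ 0) (hβ : β ≠ 0)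
    (θ₁ θ₂ θ₃ : ℝ) :
    ¬ LinearIndependent ℂ
        ![α • ψ + (β * Complex.exp (θ₁ * Complex.I)) • φ,
          α • ψp + (β * Complex.exp (θ₂ * Complex.I)) • φ,
          α • (a • ψ + b • ψp) + (β * Complex.exp (θ₃ * Complex.I)) • φ] ↔
      Complex.exp (θ₃ * Complex.I) =
        a * Complex.exp (θ₁ * Complex.I) + b * Complex.exp (θ₂ * Complex.I) := by
  set e₁ := Complex.exp (θ₁ * Complex.I)
  set e₂ := Complex.exp (θ₂ * Complex.I)
  set e₃ := Complex.exp (θ₃ * Complex.I)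
  have horth : Orthonormal ℂ ![ψ, ψp, φ] := by
    rw [orthonormal_iff_ite]
    intro i j
    fin_cases i <;> fin_cases j <;>
      simp [inner_self_eq_norm_sq_to_K, hψ, hψp, hφ, h₁, h₂, h₃,
        ← inner_conj_symm ψ, ← inner_conj_symm ψp, inner_eq_zero_symm]
  have hli : LinearIndependent ℂ ![ψ, ψp, φ] := horth.linearIndependent
  rw [Fintype.linearIndependent_iff] at hli
  constructor
  · intro hdep
    rw [Fintype.not_linearIndependent_iff] at hdep
    obtain ⟨g, hsum, i, hi⟩ := hdep
    have hexp : (g 0 * α + g 2 * (α * a)) • ψ + (g 1 * α + g 2 * (α * b)) • ψp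
        + (g 0 * (β * e₁) + g 1 * (β * e₂) + g 2 * (β * e₃)) • φ = 0 := by
      rw [← hsum, Fin.sum_univ_three]
      simp only [Matrix.cons_val_zero, Matrix.cons_val_one, Matrix.head_cons,
        Matrix.cons_val_two, Matrix.tail_cons]
      module
    have := hli ![g 0 * α + g 2 * (α * a), g 1 * α + g 2 * (α * b),
        g 0 * (β * e₁) + g 1 * (β * e₂) + g 2 * (β * e₃)] (by
      rw [Fin.sum_univ_three]
      simpa using hexp)
    have e0 := this 0
    have e1 := this 1
    have e2 := this 2
    simp only [Matrix.cons_val_zero, Matrix.cons_val_one, Matrix.head_cons,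
      Matrix.cons_val_two, Matrix.tail_cons] at e0 e1 e2
    have hg0 : g 0 = -(g 2 * a) := by
      have h' : α * (g 0 + g 2 * a) = 0 := by linear_combination e0
      have h'' := (mul_eq_zero.mp h').resolve_left hα
      linear_combination h''
    have hg1 : g 1 = -(g 2 * b) := by
      have h' : α * (g 1 + g 2 * b) = 0 := by linear_combination e1
      have h'' := (mul_eq_zero.mp h').resolve_left hα
      linear_combination h''
    have key : β * (g 2 * (e₃ - (a * e₁ + b * e₂))) = 0 := by
      linear_combination e2 - β * e₁ * hg0 - β * e₂ * hg1
    have key' := (mul_eq_zero.mp key).resolve_left hβ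
    rcases mul_eq_zero.mp key' with hg2 | hzero
    · exfalso
      apply hi
      fin_cases i <;> simp [hg0, hg1, hg2]
    · linear_combination hzero
  · intro h hLI
    rw [Fintype.linearIndependent_iff] at hLI
    have := hLI ![a, b, -1] (by
      rw [Fin.sum_univ_three]
      simp only [Matrix.cons_val_zero, Matrix.cons_val_one, Matrix.head_cons,
        Matrix.cons_val_two, Matrix.tail_cons]
      rw [h]
      module) 2
    simp at this
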